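/- arXiv:2003.06492 — 2 statements merged into one kernel-verified Lean document; each statement's English description precedes it below -/
import Mathlib

section
/- Let φ be a propositional formula (a CTL formula with no temporal operators) and V ⊆ 𝒜. If ψ is a result of forgetting V from φ in CTL, then ψ ≡ Forget(φ,V), where Forget is classical propositional forgetting defined by substitution. -/
universe u

/-- A Kripke structure over a set of atoms: a finite nonempty set of states,
a serial transition relation, and a labeling function. -/
structure Kripke (Atom : Type u) where
  State : Type u
  stateFinite : Finite State
  stateNonempty : Nonempty State
  R : State → State → Prop
  serial : ∀ s, ∃ t, R s t
  L : State → Set Atom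

instance {Atom : Type u} (M : Kripke Atom) : Finite M.State := M.stateFinite

/-- A K-structure: a Kripke structure together with one of its states. -/
structure KStruct (Atom : Type u) where
  M : Kripke Atom
  s : M.State

/-- An initial structure: a Kripke structure with an initial state `s0`,
i.e. a state admitting a path visiting every state. -/
structure InitKripke (Atom : Type u) extends Kripke Atom where
  s0 : State
  initial : ∃ π : ℕ → State, π 0 = s0 ∧ (∀ n, R (π n) (π (n + 1))) ∧ ∀ t, ∃ n, π n = t

/-- The (initial) K-structure associated to an initial structure. -/
def InitKripke.toKS {Atom : Type u} (M : InitKripke Atom) : KStruct Atom :=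
  ⟨M.toKripke, M.s0⟩

/-- The approximations `B_n^V` of `V`-bisimilarity on K-structures. -/
def BRel {Atom : Type u} (V : Set Atom) : ℕ → KStruct Atom → KStruct Atom → Prop
  | 0 => fun K1 K2 => K1.M.L K1.s \ V = K2.M.L K2.s \ V
  | n + 1 => fun K1 K2 =>
      K1.M.L K1.s \ V = K2.M.L K2.s \ V ∧
      (∀ t1, K1.M.R K1.s t1 → ∃ t2, K2.M.R K2.s t2 ∧ BRel V n ⟨K1.M, t1⟩ ⟨K2.M, t2⟩) ∧
      (∀ t2, K2.M.R K2.s t2 → ∃ t1, K1.M.R K1.s t1 ∧ BRel V n ⟨K1.M, t1⟩ ⟨K2.M, t2⟩)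

/-- `V`-bisimilarity `K1 ↔_V K2` of K-structures. -/
def VBisim {Atom : Type u} (V : Set Atom) (K1 K2 : KStruct Atom) : Prop :=
  ∀ n, BRel V n K1 K2

/-- CTL formulas in existential normal form. -/
inductive CTL (Atom : Type u) : Type u
  | bot  : CTL Atom
  | top  : CTL Atom
  | atom (p : Atom) : CTL Atom
  | neg  (φ : CTL Atom) : CTL Atom
  | or   (φ ψ : CTL Atom) : CTL Atom
  | EX   (φ : CTL Atom) : CTL Atom
  | EG   (φ : CTL Atom) : CTL Atom
  | EU   (φ ψ : CTL Atom) : CTL Atom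

namespace CTL
variable {Atom : Type u}

def and (φ ψ : CTL Atom) : CTL Atom := .neg (.or (.neg φ) (.neg ψ))
def imp (φ ψ : CTL Atom) : CTL Atom := .or (.neg φ) ψ
def iff (φ ψ : CTL Atom) : CTL Atom := (φ.imp ψ).and (ψ.imp φ)
def AX (φ : CTL Atom) : CTL Atom := .neg (.EX (.neg φ))
def EF (φ : CTL Atom) : CTL Atom := .EU .top φ
def AF (φ : CTL Atom) : CTL Atom := .neg (.EG (.neg φ))
def AG (φ : CTL Atom) : CTL Atom := .neg (.EU .top (.neg φ))

/-- The set of atoms occurring in a formula. -/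
def vars : CTL Atom → Set Atom
  | .bot => ∅
  | .top => ∅
  | .atom p => {p}
  | .neg φ => vars φ
  | .or φ ψ => vars φ ∪ vars ψ
  | .EX φ => vars φ
  | .EG φ => vars φ
  | .EU φ ψ => vars φ ∪ vars ψ

end CTL

/-- The standard CTL satisfaction relation `(M,s) ⊨ φ`. -/
def Sat {Atom : Type u} (M : Kripke Atom) : CTL Atom → M.State → Prop
  | .bot => fun _ => False
  | .top => fun _ => True
  | .atom p => fun s => p ∈ M.L s
  | .neg φ => fun s => ¬ Sat M φ s
  | .or φ ψ => fun s => Sat M φ s ∨ Sat M ψ s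
  | .EX φ => fun s => ∃ t, M.R s t ∧ Sat M φ t
  | .EG φ => fun s => ∃ π : ℕ → M.State, π 0 = s ∧ (∀ n, M.R (π n) (π (n + 1))) ∧
      ∀ n, Sat M φ (π n)
  | .EU φ ψ => fun s => ∃ π : ℕ → M.State, π 0 = s ∧ (∀ n, M.R (π n) (π (n + 1))) ∧
      ∃ i, Sat M ψ (π i) ∧ ∀ j < i, Sat M φ (π j)

/-- Satisfaction for K-structures. -/
def KSat {Atom : Type u} (K : KStruct Atom) (φ : CTL Atom) : Prop := Sat K.M φ K.s

/-- The set of models (initial K-structures) of a formula. -/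
def CTLMod {Atom : Type u} (φ : CTL Atom) : Set (InitKripke Atom) :=
  {M | Sat M.toKripke φ M.s0}

def Entails {Atom : Type u} (φ ψ : CTL Atom) : Prop := CTLMod φ ⊆ CTLMod ψ

def CTLEquiv {Atom : Type u} (φ ψ : CTL Atom) : Prop := CTLMod φ = CTLMod ψ

/-- `IR φ V`: φ is irrelevant to the atoms in V. -/
def IR {Atom : Type u} (φ : CTL Atom) (V : Set Atom) : Prop :=
  ∃ ψ : CTL Atom, CTL.vars ψ ∩ V = ∅ ∧ CTLEquiv φ ψ

/-- `V`-bisimilarity of depth-`n` computation trees rooted at `s1` (in `M1`) and `s2` (in `M2`). -/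
def TreeBisim {Atom : Type u} (V : Set Atom) (M1 M2 : Kripke Atom) :
    ℕ → M1.State → M2.State → Prop
  | 0 => fun s1 s2 => M1.L s1 \ V = M2.L s2 \ V
  | n + 1 => fun s1 s2 =>
      M1.L s1 \ V = M2.L s2 \ V ∧
      (∀ t1, M1.R s1 t1 → ∃ t2, M2.R s2 t2 ∧ TreeBisim V M1 M2 n t1 t2) ∧
      (∀ t2, M2.R s2 t2 → ∃ t1, M1.R s1 t1 ∧ TreeBisim V M1 M2 n t1 t2)

/-- Finite conjunction of a list of formulas. -/
def andList {Atom : Type u} : List (CTL Atom) → CTL Atom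
  | [] => .top
  | φ :: l => φ.and (andList l)

/-- Finite disjunction of a list of formulas. -/
def orList {Atom : Type u} : List (CTL Atom) → CTL Atom
  | [] => .bot
  | φ :: l => .or φ (orList l)

/-- A list enumerating a subset of a finite type. -/
noncomputable def setToList {α : Type u} [Finite α] (s : Set α) : List α :=
  s.toFinite.toFinset.toList

/-- The list of `R`-successors of a state. -/
noncomputable def Kripke.succList {Atom : Type u} (M : Kripke Atom) (s : M.State) :
    List M.State :=
  setToList {t | M.R s t}

/-- The characterizing formula `F_V(Tr_0(s))` of the depth-0 computation tree. -/
noncomputable def charTree0 {Atom : Type u} [Finite Atom] (M : Kripke Atom) (V : Set Atom)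
    (s : M.State) : CTL Atom :=
  (andList ((setToList (V ∩ M.L s)).map CTL.atom)).and
    (andList ((setToList (V \ M.L s)).map fun q => CTL.neg (CTL.atom q)))

/-- The characterizing formula `F_V(Tr_n(s))` of the depth-`n` computation tree of `s`. -/
noncomputable def charTree {Atom : Type u} [Finite Atom] (M : Kripke Atom) (V : Set Atom) :
    ℕ → M.State → CTL Atom
  | 0 => fun s => charTree0 M V s
  | k + 1 => fun s =>
      (andList ((M.succList s).map fun t => CTL.EX (charTree M V k t))).and
        ((CTL.AX (orList ((M.succList s).map (charTree M V k)))).and (charTree0 M V s))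

/-- `dis_V(M,s,s',k)`: `s` and `s'` are `V`-distinguishable, and `k` is the least depth at which
their computation trees fail to be `(𝒜∖V)`-bisimilar. -/
def dis {Atom : Type u} (M : Kripke Atom) (V : Set Atom) (s s' : M.State) (k : ℕ) : Prop :=
  ¬ VBisim Vᶜ ⟨M, s⟩ ⟨M, s'⟩ ∧
  IsLeast {n | ¬ TreeBisim Vᶜ M M n s s'} k

/-- The characterization number `ch(M,V)`. -/
noncomputable def ch {Atom : Type u} (M : Kripke Atom) (V : Set Atom) : ℕ :=
  letI := Classical.dec (∃ s s' k, dis M V s s' k)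
  if ∃ s s' k, dis M V s s' k then
    sSup {k | ∃ s s', dis M V s s' k}
  else
    sInf {k | (fun s s' : M.State => BRel Vᶜ k ⟨M, s⟩ ⟨M, s'⟩) =
              (fun s s' : M.State => BRel Vᶜ (k + 1) ⟨M, s⟩ ⟨M, s'⟩)}

/-- The characterizing formula `F_V(M,s0)` of an initial K-structure on `V`. -/
noncomputable def charForm {Atom : Type u} [Finite Atom] (M : InitKripke Atom) (V : Set Atom) :
    CTL Atom :=
  let T : M.State → CTL Atom := fun s => charTree M.toKripke V (ch M.toKripke V) s
  (T M.s0).and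
    (andList ((setToList (Set.univ : Set M.State)).map fun s =>
      CTL.AG ((T s).imp
        ((andList ((M.toKripke.succList s).map fun t => CTL.EX (T t))).and
          (CTL.AX (orList ((M.toKripke.succList s).map T)))))))

/-- `ψ` is a result of forgetting `V` from `φ`. -/
def IsForget {Atom : Type u} (φ : CTL Atom) (V : Set Atom) (ψ : CTL Atom) : Prop :=
  CTL.vars ψ ∩ V = ∅ ∧
  CTLMod ψ = {K : InitKripke Atom | ∃ K' ∈ CTLMod φ, VBisim V K'.toKS K.toKS}

/-- A propositional formula: a CTL formula with no temporal operators. -/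
def CTL.Propositional {Atom : Type u} : CTL Atom → Prop
  | .bot => True
  | .top => True
  | .atom _ => True
  | .neg φ => φ.Propositional
  | .or φ ψ => φ.Propositional ∧ ψ.Propositional
  | .EX _ => False
  | .EG _ => False
  | .EU _ _ => False

/-- Substitute the formula `χ` for the atom `p` in a formula. -/
def CTL.substAtom {Atom : Type u} [DecidableEq Atom] (p : Atom) (χ : CTL Atom) :
    CTL Atom → CTL Atom
  | .bot => .bot
  | .top => .top
  | .atom q => if q = p then χ else .atom q
  | .neg φ => .neg (substAtom p χ φ)
  | .or φ ψ => .or (substAtom p χ φ) (substAtom p χ ψ)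
  | .EX φ => .EX (substAtom p χ φ)
  | .EG φ => .EG (substAtom p χ φ)
  | .EU φ ψ => .EU (substAtom p χ φ) (substAtom p χ ψ)

/-- Classical propositional forgetting of a single atom: `φ[p/⊥] ∨ φ[p/⊤]`. -/
def forget1 {Atom : Type u} [DecidableEq Atom] (φ : CTL Atom) (p : Atom) : CTL Atom :=
  .or (CTL.substAtom p .bot φ) (CTL.substAtom p .top φ)

/-- Classical propositional forgetting of a list of atoms:
`Forget(φ,∅) = φ` and `Forget(φ,{p}∪V) = Forget(Forget(φ,p),V)`. -/
def forgetList {Atom : Type u} [DecidableEq Atom] (φ : CTL Atom) : List Atom → CTL Atom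
  | [] => φ
  | p :: l => forgetList (forget1 φ p) l

/-- Classical propositional forgetting of a (finite) set of atoms. -/
noncomputable def Forget {Atom : Type u} [DecidableEq Atom] [Finite Atom]
    (φ : CTL Atom) (V : Set Atom) : CTL Atom :=
  forgetList φ (setToList V)

section Aux
variable {Atom : Type u}

/-- Propositional evaluation of a formula under a set of true atoms. -/
def peval (A : Set Atom) : CTL Atom → Prop
  | .bot => False
  | .top => True
  | .atom p => p ∈ A
  | .neg φ => ¬ peval A φ
  | .or φ ψ => peval A φ ∨ peval A ψ
  | .EX _ => False
  | .EG _ => False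
  | .EU _ _ => False

lemma sat_peval (M : Kripke Atom) : ∀ (φ : CTL Atom), φ.Propositional →
    ∀ s, (Sat M φ s ↔ peval (M.L s) φ)
  | .bot, _, s => Iff.rfl
  | .top, _, s => Iff.rfl
  | .atom p, _, s => Iff.rfl
  | .neg φ, h, s => by
      simp only [Sat, peval]
      exact not_congr (sat_peval M φ h s)
  | .or φ ψ, h, s => by
      simp only [Sat, peval]
      exact or_congr (sat_peval M φ h.1 s) (sat_peval M ψ h.2 s)
  | .EX _, h, s => h.elim
  | .EG _, h, s => h.elim
  | .EU _ _, h, s => h.elim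

variable [DecidableEq Atom]

lemma peval_subst_bot (A : Set Atom) (p : Atom) :
    ∀ φ : CTL Atom, peval A (CTL.substAtom p .bot φ) ↔ peval (A \ {p}) φ
  | .bot => Iff.rfl
  | .top => Iff.rfl
  | .atom q => by
      by_cases hq : q = p <;> simp [CTL.substAtom, peval, hq]
  | .neg φ => by
      simp only [CTL.substAtom, peval]
      exact not_congr (peval_subst_bot A p φ)
  | .or φ ψ => by
      simp only [CTL.substAtom, peval]
      exact or_congr (peval_subst_bot A p φ) (peval_subst_bot A p ψ)
  | .EX _ => Iff.rfl
  | .EG _ => Iff.rfl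
  | .EU _ _ => Iff.rfl

lemma peval_subst_top (A : Set Atom) (p : Atom) :
    ∀ φ : CTL Atom, peval A (CTL.substAtom p .top φ) ↔ peval (A ∪ {p}) φ
  | .bot => Iff.rfl
  | .top => Iff.rfl
  | .atom q => by
      by_cases hq : q = p <;> simp [CTL.substAtom, peval, hq]
  | .neg φ => by
      simp only [CTL.substAtom, peval]
      exact not_congr (peval_subst_top A p φ)
  | .or φ ψ => by
      simp only [CTL.substAtom, peval]
      exact or_congr (peval_subst_top A p φ) (peval_subst_top A p ψ)
  | .EX _ => Iff.rfl
  | .EG _ => Iff.rfl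
  | .EU _ _ => Iff.rfl

lemma peval_forget1 (A : Set Atom) (p : Atom) (φ : CTL Atom) :
    peval A (forget1 φ p) ↔ peval (A \ {p}) φ ∨ peval (A ∪ {p}) φ := by
  simp only [forget1, peval]
  exact or_congr (peval_subst_bot A p φ) (peval_subst_top A p φ)

lemma substAtom_prop (p : Atom) (χ : CTL Atom) (hχ : χ.Propositional) :
    ∀ φ : CTL Atom, φ.Propositional → (CTL.substAtom p χ φ).Propositional
  | .bot, _ => trivial
  | .top, _ => trivial
  | .atom q, _ => by
      by_cases hq : q = p <;> simp [CTL.substAtom, hq]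
      exacts [hχ, trivial]
  | .neg φ, h => substAtom_prop p χ hχ φ h
  | .or φ ψ, h => ⟨substAtom_prop p χ hχ φ h.1, substAtom_prop p χ hχ ψ h.2⟩
  | .EX _, h => h.elim
  | .EG _, h => h.elim
  | .EU _ _, h => h.elim

lemma forget1_prop (φ : CTL Atom) (hφ : φ.Propositional) (p : Atom) :
    (forget1 φ p).Propositional :=
  ⟨substAtom_prop p .bot trivial φ hφ, substAtom_prop p .top trivial φ hφ⟩

lemma forgetList_prop : ∀ (l : List Atom) (φ : CTL Atom), φ.Propositional →
    (forgetList φ l).Propositional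
  | [], φ, h => h
  | p :: l, φ, h => forgetList_prop l (forget1 φ p) (forget1_prop φ h p)

lemma peval_forgetList : ∀ (l : List Atom) (φ : CTL Atom) (A : Set Atom),
    peval A (forgetList φ l) ↔
      ∃ B : Set Atom, (∀ q, q ∉ l → (q ∈ B ↔ q ∈ A)) ∧ peval B φ := by
  intro l
  induction l with
  | nil =>
    intro φ A
    constructor
    · intro h; exact ⟨A, fun q _ => Iff.rfl, h⟩
    · rintro ⟨B, hB, h⟩
      have : B = A := Set.ext fun q => hB q (by simp)
      rwa [this] at h
  | cons p l ih =>
    intro φ A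
    show peval A (forgetList (forget1 φ p) l) ↔ _
    rw [ih]
    constructor
    · rintro ⟨B, hB, h⟩
      rw [peval_forget1] at h
      rcases h with h | h
      · refine ⟨B \ {p}, fun q hq => ?_, h⟩
        have hq1 : q ≠ p := fun e => hq (by simp [e])
        have hq2 : q ∉ l := fun e => hq (by simp [e])
        simp [Set.mem_diff, hq1, hB q hq2]
      · refine ⟨B ∪ {p}, fun q hq => ?_, h⟩
        have hq1 : q ≠ p := fun e => hq (by simp [e])
        have hq2 : q ∉ l := fun e => hq (by simp [e])
        simp [Set.mem_union, hq1, hB q hq2]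
    · rintro ⟨B, hB, h⟩
      refine ⟨(B \ {p}) ∪ (A ∩ {p}), fun q hq => ?_, ?_⟩
      · by_cases hq1 : q = p
        · subst hq1; simp
        · have : q ∈ B ↔ q ∈ A := hB q (by simp [hq, hq1])
          simp [Set.mem_union, Set.mem_diff, hq1, this]
      · rw [peval_forget1]
        by_cases hp : p ∈ B
        · right
          have : (B \ {p}) ∪ (A ∩ {p}) ∪ {p} = B ∪ {p} := by
            ext q; by_cases hq1 : q = p <;> simp [hq1, hp]
          rw [this]
          have : B ∪ {p} = B := by ext q; by_cases hq1 : q = p <;> simp [hq1, hp]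
          rwa [this]
        · left
          have : ((B \ {p}) ∪ (A ∩ {p})) \ {p} = B \ {p} := by
            ext q; by_cases hq1 : q = p <;> simp [hq1]
          rw [this]
          have : B \ {p} = B := by ext q; by_cases hq1 : q = p <;> simp [hq1, hp]
          rwa [this]

lemma mem_setToList {α : Type u} [Finite α] (s : Set α) (x : α) :
    x ∈ setToList s ↔ x ∈ s := by
  simp [setToList, Set.Finite.mem_toFinset]

lemma brel_relabel (V : Set Atom) (M : Kripke Atom) (L' : M.State → Set Atom)
    (hL : ∀ s, L' s \ V = M.L s \ V) :
    ∀ (n : ℕ) (s : M.State), BRel V n ⟨{ M with L := L' }, s⟩ ⟨M, s⟩ := by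
  intro n
  induction n with
  | zero => intro s; exact hL s
  | succ n ih =>
    intro s
    exact ⟨hL s, fun t1 h => ⟨t1, h, ih t1⟩, fun t2 h => ⟨t2, h, ih t2⟩⟩

end Aux

/-- on propositional formulas, CTL forgetting agrees with classical
propositional forgetting. -/
theorem forget_propositional {Atom : Type u} [DecidableEq Atom] [Finite Atom]
    (φ : CTL Atom) (hφ : φ.Propositional) (V : Set Atom) (ψ : CTL Atom)
    (h : IsForget φ V ψ) :
    CTLEquiv ψ (Forget φ V) := by
  rcases h with ⟨-, hmod⟩
  have hFprop : (Forget φ V).Propositional := forgetList_prop _ φ hφ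
  apply Set.ext
  intro K
  rw [hmod]
  constructor
  · rintro ⟨K', hK', hbis⟩
    show Sat K.toKripke (Forget φ V) K.s0
    rw [sat_peval _ _ hFprop]
    rw [Forget, peval_forgetList]
    refine ⟨K'.toKripke.L K'.s0, ?_, ?_⟩
    · intro q hq
      have hqV : q ∉ V := fun h => hq ((mem_setToList V q).2 h)
      have h0 := hbis 0
      have : K'.toKripke.L K'.s0 \ V = K.toKripke.L K.s0 \ V := h0
      constructor
      · intro hqB
        have : q ∈ K.toKripke.L K.s0 \ V := this ▸ (Set.mem_diff q).2 ⟨hqB, hqV⟩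
        exact this.1
      · intro hqA
        have : q ∈ K'.toKripke.L K'.s0 \ V := this.symm ▸ (Set.mem_diff q).2 ⟨hqA, hqV⟩
        exact this.1
    · exact (sat_peval K'.toKripke φ hφ K'.s0).1 hK'
  · intro hK
    have hK' : peval (K.toKripke.L K.s0) (Forget φ V) :=
      (sat_peval K.toKripke _ hFprop K.s0).1 hK
    rw [Forget, peval_forgetList] at hK'
    obtain ⟨B, hB, hpB⟩ := hK'
    classical
    set L' : K.State → Set Atom := fun s => if s = K.s0 then B else K.toKripke.L s with hL'def
    have hL : ∀ s, L' s \ V = K.toKripke.L s \ V := by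
      intro s
      by_cases hs : s = K.s0
      · subst hs
        ext q
        by_cases hqV : q ∈ V
        · simp [L', hqV]
        · have := hB q (fun h => hqV ((mem_setToList V q).1 h))
          simp [L', hqV, this]
      · simp [L', hs]
    refine ⟨⟨{ K.toKripke with L := L' }, K.s0, K.initial⟩, ?_, ?_⟩
    · show Sat { K.toKripke with L := L' } φ K.s0
      rw [sat_peval _ φ hφ]
      show peval (L' K.s0) φ
      simpa [L'] using hpB
    · intro n
      exact brel_relabel V K.toKripke L' hL n K.s0
end

section
/- Let φ be a CTL formula, V ⊆ Var(φ), and q ∈ Var(φ)∖V. (i) If ψ is a result of forgetting (Var(φ) ∪ {q})∖V from φ ∧ q and Var(ψ) ⊆ V, then ψ is a strongest necessary condition of q on V under φ. (ii) If ψ' is a result of forgetting (Var(φ) ∪ {q})∖V from φ ∧ ¬q and Var(ψ') ⊆ V, then ¬ψ' is a weakest sufficient condition of q on V under φ. -/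
universe u

/-- `ψ` is a necessary condition of `ℓ` on `V` under `φ`. -/
def IsNC {Atom : Type u} (φ ℓ : CTL Atom) (V : Set Atom) (ψ : CTL Atom) : Prop :=
  CTL.vars ψ ⊆ V ∧ Entails φ (ℓ.imp ψ)

/-- `ψ` is a sufficient condition of `ℓ` on `V` under `φ`. -/
def IsSC {Atom : Type u} (φ ℓ : CTL Atom) (V : Set Atom) (ψ : CTL Atom) : Prop :=
  CTL.vars ψ ⊆ V ∧ Entails φ (ψ.imp ℓ)

/-- `ψ` is a strongest necessary condition of `ℓ` on `V` under `φ`. -/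
def IsSNC {Atom : Type u} (φ ℓ : CTL Atom) (V : Set Atom) (ψ : CTL Atom) : Prop :=
  IsNC φ ℓ V ψ ∧ ∀ ψ' : CTL Atom, IsNC φ ℓ V ψ' → Entails φ (ψ.imp ψ')

/-- `ψ` is a weakest sufficient condition of `ℓ` on `V` under `φ`. -/
def IsWSC {Atom : Type u} (φ ℓ : CTL Atom) (V : Set Atom) (ψ : CTL Atom) : Prop :=
  IsSC φ ℓ V ψ ∧ ∀ ψ' : CTL Atom, IsSC φ ℓ V ψ' → Entails φ (ψ'.imp ψ)

section Aux
variable {Atom : Type u}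

lemma brel_mono {V : Set Atom} : ∀ (n : ℕ) (K1 K2 : KStruct Atom),
    BRel V (n + 1) K1 K2 → BRel V n K1 K2 := by
  intro n
  induction n with
  | zero => intro K1 K2 h; exact h.1
  | succ n ih =>
    intro K1 K2 h
    refine ⟨h.1, fun t1 ht1 => ?_, fun t2 ht2 => ?_⟩
    · obtain ⟨t2, ht2, hb⟩ := h.2.1 t1 ht1
      exact ⟨t2, ht2, ih _ _ hb⟩
    · obtain ⟨t1, ht1, hb⟩ := h.2.2 t2 ht2
      exact ⟨t1, ht1, ih _ _ hb⟩

lemma brel_of_le {V : Set Atom} {m n : ℕ} (h : n ≤ m) (K1 K2 : KStruct Atom)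
    (hb : BRel V m K1 K2) : BRel V n K1 K2 := by
  induction m with
  | zero => simpa [Nat.le_zero.mp h] using hb
  | succ m ih =>
    rcases Nat.lt_or_ge n (m+1) with h' | h'
    · exact ih (Nat.lt_succ_iff.mp h') (brel_mono m _ _ hb)
    · have : n = m + 1 := le_antisymm h h'
      simpa [this] using hb

lemma brel_refl {V : Set Atom} : ∀ (n : ℕ) (K : KStruct Atom), BRel V n K K := by
  intro n
  induction n with
  | zero => intro K; rfl
  | succ n ih =>
    intro K
    exact ⟨rfl, fun t ht => ⟨t, ht, ih _⟩, fun t ht => ⟨t, ht, ih _⟩⟩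

lemma brel_symm {V : Set Atom} : ∀ (n : ℕ) (K1 K2 : KStruct Atom),
    BRel V n K1 K2 → BRel V n K2 K1 := by
  intro n
  induction n with
  | zero => intro K1 K2 h; exact h.symm
  | succ n ih =>
    intro K1 K2 h
    refine ⟨h.1.symm, fun t2 ht2 => ?_, fun t1 ht1 => ?_⟩
    · obtain ⟨t1, ht1, hb⟩ := h.2.2 t2 ht2
      exact ⟨t1, ht1, ih _ _ hb⟩
    · obtain ⟨t2, ht2, hb⟩ := h.2.1 t1 ht1
      exact ⟨t2, ht2, ih _ _ hb⟩

lemma vbisim_symm {V : Set Atom} {K1 K2 : KStruct Atom} (h : VBisim V K1 K2) :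
    VBisim V K2 K1 := fun n => brel_symm n _ _ (h n)

lemma vbisim_refl {V : Set Atom} (K : KStruct Atom) : VBisim V K K :=
  fun n => brel_refl n K

/-- VBisim is a bisimulation (forward direction), using finiteness of states. -/
lemma vbisim_fwd {V : Set Atom} {M1 M2 : Kripke Atom} {s1 : M1.State} {s2 : M2.State}
    (h : VBisim V ⟨M1, s1⟩ ⟨M2, s2⟩) {t1 : M1.State} (ht1 : M1.R s1 t1) :
    ∃ t2, M2.R s2 t2 ∧ VBisim V ⟨M1, t1⟩ ⟨M2, t2⟩ := by
  have hstep : ∀ n : ℕ, ∃ t2, M2.R s2 t2 ∧ BRel V n ⟨M1, t1⟩ ⟨M2, t2⟩ := by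
    intro n
    exact (h (n + 1)).2.1 t1 ht1
  choose f hf1 hf2 using hstep
  haveI : Finite M2.State := M2.stateFinite
  obtain ⟨t2, ht2⟩ := Finite.exists_infinite_fiber f
  have hinf : (f ⁻¹' {t2}).Infinite := Set.infinite_coe_iff.mp ht2
  obtain ⟨n0, hn0⟩ : ∃ n, f n = t2 := by
    obtain ⟨n, hn⟩ := hinf.nonempty
    exact ⟨n, hn⟩
  refine ⟨t2, hn0 ▸ hf1 n0, fun n => ?_⟩
  obtain ⟨m, hm, hnm⟩ := hinf.exists_gt n
  have : BRel V m ⟨M1, t1⟩ ⟨M2, t2⟩ := hm ▸ hf2 m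
  exact brel_of_le (le_of_lt hnm) _ _ this

lemma vbisim_bwd {V : Set Atom} {M1 M2 : Kripke Atom} {s1 : M1.State} {s2 : M2.State}
    (h : VBisim V ⟨M1, s1⟩ ⟨M2, s2⟩) {t2 : M2.State} (ht2 : M2.R s2 t2) :
    ∃ t1, M1.R s1 t1 ∧ VBisim V ⟨M1, t1⟩ ⟨M2, t2⟩ := by
  obtain ⟨t1, ht1, hb⟩ := vbisim_fwd (vbisim_symm h) ht2
  exact ⟨t1, ht1, vbisim_symm hb⟩

/-- Transfer of paths along a bisimulation. -/
lemma path_transfer {V : Set Atom} {M1 M2 : Kripke Atom} {s2 : M2.State}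
    (π : ℕ → M1.State) (hπ : ∀ n, M1.R (π n) (π (n + 1)))
    (h : VBisim V ⟨M1, π 0⟩ ⟨M2, s2⟩) :
    ∃ σ : ℕ → M2.State, σ 0 = s2 ∧ (∀ n, M2.R (σ n) (σ (n + 1))) ∧
      ∀ n, VBisim V ⟨M1, π n⟩ ⟨M2, σ n⟩ := by
  have step : ∀ n (t : M2.State), VBisim V ⟨M1, π n⟩ ⟨M2, t⟩ →
      ∃ t', M2.R t t' ∧ VBisim V ⟨M1, π (n + 1)⟩ ⟨M2, t'⟩ := by
    intro n t hb
    exact vbisim_fwd hb (hπ n)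
  choose f hf1 hf2 using step
  let g : (n : ℕ) → {t : M2.State // VBisim V ⟨M1, π n⟩ ⟨M2, t⟩} :=
    fun n => Nat.rec ⟨s2, h⟩ (fun n p => ⟨f n p.1 p.2, hf2 n p.1 p.2⟩) n
  exact ⟨fun n => (g n).1, rfl, fun n => hf1 n (g n).1 (g n).2, fun n => (g n).2⟩

lemma vars_or_disj {V : Set Atom} {χ1 χ2 : CTL Atom}
    (h : CTL.vars (CTL.or χ1 χ2) ∩ V = ∅) :
    CTL.vars χ1 ∩ V = ∅ ∧ CTL.vars χ2 ∩ V = ∅ := by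
  simp only [CTL.vars, Set.union_inter_distrib_right, Set.union_empty_iff] at h
  exact h

/-- Bisimulation invariance of CTL satisfaction. -/
lemma sat_invariant (W : Set Atom) :
    ∀ χ : CTL Atom, CTL.vars χ ∩ W = ∅ →
      ∀ (M1 M2 : Kripke Atom) (s1 : M1.State) (s2 : M2.State),
        VBisim W ⟨M1, s1⟩ ⟨M2, s2⟩ → (Sat M1 χ s1 ↔ Sat M2 χ s2) := by
  intro χ
  induction χ with
  | bot => intro _ M1 M2 s1 s2 _; exact Iff.rfl
  | top => intro _ M1 M2 s1 s2 _; exact Iff.rfl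
  | atom p =>
    intro hv M1 M2 s1 s2 h
    have hp : p ∉ W := by
      intro hpW
      have : p ∈ (CTL.vars (CTL.atom p) : Set Atom) ∩ W := ⟨rfl, hpW⟩
      simp [hv] at this
    have h0 : M1.L s1 \ W = M2.L s2 \ W := h 0
    constructor
    · intro hs; exact ((Set.ext_iff.mp h0 p).mp ⟨hs, hp⟩).1
    · intro hs; exact ((Set.ext_iff.mp h0 p).mpr ⟨hs, hp⟩).1
  | neg χ ih =>
    intro hv M1 M2 s1 s2 h
    exact not_congr (ih hv M1 M2 s1 s2 h)
  | or χ1 χ2 ih1 ih2 =>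
    intro hv M1 M2 s1 s2 h
    obtain ⟨h1, h2⟩ := vars_or_disj hv
    exact or_congr (ih1 h1 M1 M2 s1 s2 h) (ih2 h2 M1 M2 s1 s2 h)
  | EX χ ih =>
    intro hv M1 M2 s1 s2 h
    constructor
    · rintro ⟨t1, ht1, hs⟩
      obtain ⟨t2, ht2, hb⟩ := vbisim_fwd h ht1
      exact ⟨t2, ht2, (ih hv M1 M2 t1 t2 hb).mp hs⟩
    · rintro ⟨t2, ht2, hs⟩
      obtain ⟨t1, ht1, hb⟩ := vbisim_bwd h ht2
      exact ⟨t1, ht1, (ih hv M1 M2 t1 t2 hb).mpr hs⟩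
  | EG χ ih =>
    intro hv M1 M2 s1 s2 h
    constructor
    · rintro ⟨π, hπ0, hπR, hπS⟩
      obtain ⟨σ, hσ0, hσR, hσB⟩ := path_transfer π hπR (hπ0 ▸ h)
      exact ⟨σ, hσ0, hσR, fun n => (ih hv M1 M2 (π n) (σ n) (hσB n)).mp (hπS n)⟩
    · rintro ⟨σ, hσ0, hσR, hσS⟩
      obtain ⟨π, hπ0, hπR, hπB⟩ := path_transfer σ hσR (hσ0 ▸ vbisim_symm h)
      exact ⟨π, hπ0, hπR, fun n =>
        (ih hv M1 M2 (π n) (σ n) (vbisim_symm (hπB n))).mpr (hσS n)⟩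
  | EU χ1 χ2 ih1 ih2 =>
    intro hv M1 M2 s1 s2 h
    obtain ⟨h1, h2⟩ := vars_or_disj (χ1 := χ1) (χ2 := χ2) hv
    constructor
    · rintro ⟨π, hπ0, hπR, i, hi, hj⟩
      obtain ⟨σ, hσ0, hσR, hσB⟩ := path_transfer π hπR (hπ0 ▸ h)
      exact ⟨σ, hσ0, hσR, i, (ih2 h2 M1 M2 (π i) (σ i) (hσB i)).mp hi,
        fun j hji => (ih1 h1 M1 M2 (π j) (σ j) (hσB j)).mp (hj j hji)⟩
    · rintro ⟨σ, hσ0, hσR, i, hi, hj⟩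
      obtain ⟨π, hπ0, hπR, hπB⟩ := path_transfer σ hσR (hσ0 ▸ vbisim_symm h)
      exact ⟨π, hπ0, hπR, i,
        (ih2 h2 M1 M2 (π i) (σ i) (vbisim_symm (hπB i))).mpr hi,
        fun j hji => (ih1 h1 M1 M2 (π j) (σ j) (vbisim_symm (hπB j))).mpr (hj j hji)⟩

lemma sat_and {M : Kripke Atom} {χ1 χ2 : CTL Atom} {s : M.State} :
    Sat M (χ1.and χ2) s ↔ Sat M χ1 s ∧ Sat M χ2 s := by
  simp [CTL.and, Sat]

lemma sat_imp {M : Kripke Atom} {χ1 χ2 : CTL Atom} {s : M.State} :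
    Sat M (χ1.imp χ2) s ↔ (Sat M χ1 s → Sat M χ2 s) := by
  simp [CTL.imp, Sat, imp_iff_not_or]

end Aux

/-- forgetting `(Var(φ) ∪ {q}) ∖ V` from `φ ∧ q` yields an SNC of `q` on `V`
under `φ`, and forgetting it from `φ ∧ ¬q` yields, after negation, a WSC of `q` on `V`
under `φ`. -/
theorem snc_wsc_via_forget {Atom : Type u} [Finite Atom] (φ : CTL Atom) (V : Set Atom)
    (q : Atom) (hV : V ⊆ CTL.vars φ) (hq : q ∈ CTL.vars φ \ V) :
    (∀ ψ : CTL Atom,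
      IsForget (φ.and (CTL.atom q)) ((CTL.vars φ ∪ {q}) \ V) ψ → CTL.vars ψ ⊆ V →
        IsSNC φ (CTL.atom q) V ψ) ∧
    (∀ ψ' : CTL Atom,
      IsForget (φ.and (CTL.neg (CTL.atom q))) ((CTL.vars φ ∪ {q}) \ V) ψ' →
        CTL.vars ψ' ⊆ V →
        IsWSC φ (CTL.atom q) V (CTL.neg ψ')) := by
  set W := (CTL.vars φ ∪ {q}) \ V with hW
  have hdisj : ∀ χ : CTL Atom, CTL.vars χ ⊆ V → CTL.vars χ ∩ W = ∅ := by
    intro χ hχ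
    ext x
    simp only [Set.mem_inter_iff, Set.mem_empty_iff_false, iff_false, not_and]
    intro hx hxW
    exact hxW.2 (hχ hx)
  constructor
  · intro ψ hF hvars
    obtain ⟨hvψW, hMod⟩ := hF
    have hNC : IsNC φ (CTL.atom q) V ψ := by
      refine ⟨hvars, fun M hM => ?_⟩
      show Sat M.toKripke ((CTL.atom q).imp ψ) M.s0
      rw [sat_imp]
      intro hq'
      have hMq : M ∈ CTLMod (φ.and (CTL.atom q)) := sat_and.mpr ⟨hM, hq'⟩
      have hMem : M ∈ CTLMod ψ := by
        rw [hMod]; exact ⟨M, hMq, vbisim_refl _⟩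
      exact hMem
    refine ⟨hNC, fun ψ' hψ' M hM => ?_⟩
    show Sat M.toKripke (ψ.imp ψ') M.s0
    rw [sat_imp]
    intro hsψ
    have hMem : M ∈ CTLMod ψ := hsψ
    rw [hMod] at hMem
    obtain ⟨K', hK', hbis⟩ := hMem
    have hK'φ : K' ∈ CTLMod φ := (sat_and.mp hK').1
    have hK'q : Sat K'.toKripke (CTL.atom q) K'.s0 := (sat_and.mp hK').2
    have hK'ψ' : Sat K'.toKripke ψ' K'.s0 := sat_imp.mp (hψ'.2 hK'φ) hK'q
    exact (sat_invariant W ψ' (hdisj ψ' hψ'.1) _ _ _ _ hbis).mp hK'ψ'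
  · intro ψ' hF hvars
    obtain ⟨hvW, hMod⟩ := hF
    have hSC : IsSC φ (CTL.atom q) V (CTL.neg ψ') := by
      refine ⟨hvars, fun M hM => ?_⟩
      show Sat M.toKripke ((CTL.neg ψ').imp (CTL.atom q)) M.s0
      rw [sat_imp]
      intro hnψ'
      by_contra hq'
      have hMnq : M ∈ CTLMod (φ.and (CTL.neg (CTL.atom q))) := sat_and.mpr ⟨hM, hq'⟩
      have hMem : M ∈ CTLMod ψ' := by
        rw [hMod]; exact ⟨M, hMnq, vbisim_refl _⟩
      exact hnψ' hMem
    refine ⟨hSC, fun χ hχ M hM => ?_⟩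
    show Sat M.toKripke (χ.imp (CTL.neg ψ')) M.s0
    rw [sat_imp]
    intro hχs
    show ¬ Sat M.toKripke ψ' M.s0
    intro hψ's
    have hMem : M ∈ CTLMod ψ' := hψ's
    rw [hMod] at hMem
    obtain ⟨K', hK', hbis⟩ := hMem
    have hK'φ : K' ∈ CTLMod φ := (sat_and.mp hK').1
    have hK'nq : ¬ Sat K'.toKripke (CTL.atom q) K'.s0 := (sat_and.mp hK').2
    have hK'χ : Sat K'.toKripke χ K'.s0 :=
      (sat_invariant W χ (hdisj χ hχ.1) _ _ _ _ hbis).mpr hχs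
    exact hK'nq (sat_imp.mp (hχ.2 hK'φ) hK'χ)
end
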